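/- arXiv:2306.00468 — 2 statements merged into one kernel-verified Lean document; each statement's English description precedes it below -/
import Mathlib

section
/- For every quintuple P of positive rationals and every finite composition g = γₜ∘⋯∘γ₁ where each γᵢ ∈ {α, β, α⁻¹, β⁻¹}, one has φ(g(P)) = g̃(φ(P)), where g̃ = γ̃ₜ∘⋯∘γ̃₁ is the corresponding composition with γ replaced by its tilde counterpart (α by α̃, β by β̃, and likewise for inverses). -/
abbrev Q5 := ℚ × ℚ × ℚ × ℚ × ℚ

/-- α(a,b,c,d,e) = (b, (b²+cd)/a, c, d, e) -/
def actAlpha : Q5 → Q5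
  | (a, b, c, d, e) => (b, (b ^ 2 + c * d) / a, c, d, e)

/-- β(a,b,c,d,e) = (b, c, (ac+be)/d, a, e) -/
def actBeta : Q5 → Q5
  | (a, b, c, d, e) => (b, c, (a * c + b * e) / d, a, e)

/-- α⁻¹(a,b,c,d,e) = ((a²+cd)/b, a, c, d, e) -/
def actAlphaInv : Q5 → Q5
  | (a, b, c, d, e) => ((a ^ 2 + c * d) / b, a, c, d, e)

/-- β⁻¹(a,b,c,d,e) = (d, a, b, (ae+bd)/c, e) -/
def actBetaInv : Q5 → Q5
  | (a, b, c, d, e) => (d, a, b, (a * e + b * d) / c, e)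

/-- Generators of the group G. -/
inductive Gen | A | B | Ainv | Binv

def Gen.app : Gen → Q5 → Q5
  | .A => actAlpha
  | .B => actBeta
  | .Ainv => actAlphaInv
  | .Binv => actBetaInv

/-- An element of G, given as a word in the generators, applied to a quintuple. -/
def applyWord (w : List Gen) (P : Q5) : Q5 := w.foldl (fun Q g => g.app Q) P

def Pos5 : Q5 → Prop
  | (a, b, c, d, e) => 0 < a ∧ 0 < b ∧ 0 < c ∧ 0 < d ∧ 0 < e
abbrev Q3 := ℚ × ℚ × ℚ

/-- α̃(x,y,z) = (x, z, xz−y) -/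
def tAlpha : Q3 → Q3
  | (x, y, z) => (x, z, x * z - y)

/-- β̃(x,y,z) = (y, z, x) -/
def tBeta : Q3 → Q3
  | (x, y, z) => (y, z, x)

/-- α̃⁻¹(x,y,z) = (x, xy−z, y) -/
def tAlphaInv : Q3 → Q3
  | (x, y, z) => (x, x * y - z, y)

/-- β̃⁻¹(x,y,z) = (z, x, y) -/
def tBetaInv : Q3 → Q3
  | (x, y, z) => (z, x, y)

/-- Generators of the group G̃. -/
inductive TGen | A | B | Ainv | Binv

def TGen.app : TGen → Q3 → Q3
  | .A => tAlpha
  | .B => tBeta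
  | .Ainv => tAlphaInv
  | .Binv => tBetaInv

/-- An element of G̃, given as a word in the generators, applied to a triple. -/
def applyTWord (w : List TGen) (p : Q3) : Q3 := w.foldl (fun q g => g.app q) p
def phiC0 : Q5 → ℚ
  | (a, b, c, d, _) => (a ^ 2 + b ^ 2 + c * d) / (a * b)

def phiC1 : Q5 → ℚ
  | (a, b, c, d, e) => (c ^ 2 * d + a ^ 2 * c + b ^ 2 * d + a * b * e) / (b * c * d)

def phiC2 : Q5 → ℚ
  | (a, b, c, d, e) => (c * d ^ 2 + a ^ 2 * c + b ^ 2 * d + a * b * e) / (a * c * d)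

def phi (P : Q5) : ℚ × ℚ × ℚ := (phiC0 P, phiC1 P, phiC2 P)

/-- The tilde counterpart of a generator of G: α ↦ α̃, β ↦ β̃, α⁻¹ ↦ α̃⁻¹, β⁻¹ ↦ β̃⁻¹. -/
def Gen.tilde : Gen → TGen
  | .A => .A
  | .B => .B
  | .Ainv => .Ainv
  | .Binv => .Binv

lemma pos_app (g : Gen) (P : Q5) (h : Pos5 P) : Pos5 (g.app P) := by
  obtain ⟨a, b, c, d, e⟩ := P
  obtain ⟨ha, hb, hc, hd, he⟩ := h
  cases g <;>
    simp only [Gen.app, actAlpha, actBeta, actAlphaInv, actBetaInv, Pos5] <;>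
    refine ⟨by positivity, by positivity, by positivity, by positivity, by positivity⟩

lemma step (g : Gen) (P : Q5) (h : Pos5 P) :
    phi (g.app P) = g.tilde.app (phi P) := by
  obtain ⟨a, b, c, d, e⟩ := P
  obtain ⟨ha, hb, hc, hd, he⟩ := h
  have ha' := ha.ne'
  have hb' := hb.ne'
  have hc' := hc.ne'
  have hd' := hd.ne'
  have he' := he.ne'
  cases g <;>
    simp only [Gen.app, Gen.tilde, TGen.app, actAlpha, actBeta, actAlphaInv, actBetaInv,
      tAlpha, tBeta, tAlphaInv, tBetaInv, phi, phiC0, phiC1, phiC2, Prod.mk.injEq] <;>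
    refine ⟨by field_simp; ring, by field_simp; ring, by field_simp; ring⟩

/-- φ(g(P)) = g̃(φ(P)) for every finite composition g of α, β, α⁻¹, β⁻¹. -/
theorem phi_commutes_with_G (P : Q5) (hP : Pos5 P) (w : List Gen) :
    phi (applyWord w P) = applyTWord (w.map Gen.tilde) (phi P) := by
  induction w generalizing P with
  | nil => rfl
  | cons g w ih =>
      have h1 : applyWord (g :: w) P = applyWord w (g.app P) := rfl
      have h2 : applyTWord ((g :: w).map Gen.tilde) (phi P)
          = applyTWord (w.map Gen.tilde) (g.tilde.app (phi P)) := rfl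
      rw [h1, h2, ← step g P hP]
      exact ih _ (pos_app g P hP)
end

section
/- Fix a positive integer ε. The set of pairs (x,y) of positive integers satisfying x² − 9xy + y² + 3εx + 3εy + ε² = 0 with ε dividing both x and y equals the set of pairs (x,y) such that (x, y, ε) = (ε, ε, ε)·Mⁿ for some integer n, where M is the 3×3 integer matrix with rows (9,1,0), (−1,0,0), (−3,0,1) (which is invertible over ℤ, so integer powers Mⁿ are defined for all n ∈ ℤ). -/
/-- The matrix M = [[9,1,0],[−1,0,0],[−3,0,1]], invertible over ℤ
(with inverse [[0,−1,0],[1,9,0],[0,−3,1]]), as a unit of the ring of 3×3 integer matrices,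
so that Mⁿ is defined for all n ∈ ℤ. -/
def matM : (Matrix (Fin 3) (Fin 3) ℤ)ˣ where
  val := !![9, 1, 0; -1, 0, 0; -3, 0, 1]
  inv := !![0, -1, 0; 1, 9, 0; 0, -3, 1]
  val_inv := by
    rw [Matrix.mul_fin_three, Matrix.one_fin_three]; norm_num
  inv_val := by
    rw [Matrix.mul_fin_three, Matrix.one_fin_three]; norm_num


lemma vmulM (w : Fin 3 → ℤ) : Matrix.vecMul w (matM : Matrix (Fin 3) (Fin 3) ℤ)
    = ![9 * w 0 - w 1 - 3 * w 2, w 0, w 2] := by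
  funext j; fin_cases j <;>
    · simp [matM, Matrix.vecMul, dotProduct, Fin.sum_univ_three, Matrix.vecHead,
        Matrix.vecTail]
      try ring

lemma vmulMinv (w : Fin 3 → ℤ) :
    Matrix.vecMul w ((matM⁻¹ : (Matrix (Fin 3) (Fin 3) ℤ)ˣ) : Matrix (Fin 3) (Fin 3) ℤ)
    = ![w 1, 9 * w 1 - w 0 - 3 * w 2, w 2] := by
  funext j; fin_cases j <;>
    · simp [matM, Matrix.vecMul, dotProduct, Fin.sum_univ_three, Matrix.vecHead,
        Matrix.vecTail]
      try ring

/-- Every point on the M-orbit of (ε,ε,ε) is a positive solution. -/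
lemma orbit_prop (ε : ℕ) (hε : 0 < ε) (n : ℤ) :
    ∃ x y : ℤ, Matrix.vecMul ![(ε : ℤ), (ε : ℤ), (ε : ℤ)]
        ((matM ^ n : (Matrix (Fin 3) (Fin 3) ℤ)ˣ) : Matrix (Fin 3) (Fin 3) ℤ) = ![x, y, (ε : ℤ)]
      ∧ 0 < x ∧ 0 < y
      ∧ x ^ 2 - 9 * x * y + y ^ 2 + 3 * (ε : ℤ) * x + 3 * (ε : ℤ) * y + (ε : ℤ) ^ 2 = 0
      ∧ (ε : ℤ) ∣ x ∧ (ε : ℤ) ∣ y := by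
  have hε1 : (0 : ℤ) < (ε : ℤ) := by exact_mod_cast hε
  induction n using Int.induction_on with
  | zero =>
    refine ⟨ε, ε, ?_, hε1, hε1, by ring, dvd_refl _, dvd_refl _⟩
    simp
  | succ n ih =>
    obtain ⟨x, y, h, hx, hy, heq, hdx, hdy⟩ := ih
    have hstep : Matrix.vecMul ![(ε : ℤ), (ε : ℤ), (ε : ℤ)]
        ((matM ^ ((n : ℤ) + 1) : (Matrix (Fin 3) (Fin 3) ℤ)ˣ) : Matrix (Fin 3) (Fin 3) ℤ)
        = ![9 * x - y - 3 * (ε : ℤ), x, (ε : ℤ)] := by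
      rw [zpow_add_one, Units.val_mul, ← Matrix.vecMul_vecMul, h, vmulM]
      simp
    have hprod : (9 * x - y - 3 * (ε : ℤ)) * y = x ^ 2 + 3 * (ε : ℤ) * x + (ε : ℤ) ^ 2 := by
      linear_combination -heq
    have hppos : 0 < (9 * x - y - 3 * (ε : ℤ)) * y := by
      rw [hprod]; positivity
    have hX : 0 < 9 * x - y - 3 * (ε : ℤ) := by
      rcases mul_pos_iff.mp hppos with ⟨h1, _⟩ | ⟨_, h2⟩
      · exact h1
      · linarith
    refine ⟨9 * x - y - 3 * (ε : ℤ), x, hstep, hX, hx, by linear_combination heq, ?_, hdx⟩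
    exact dvd_sub (dvd_sub (Dvd.dvd.mul_left hdx 9) hdy) (Dvd.dvd.mul_left (dvd_refl _) 3)
  | pred n ih =>
    obtain ⟨x, y, h, hx, hy, heq, hdx, hdy⟩ := ih
    have hstep : Matrix.vecMul ![(ε : ℤ), (ε : ℤ), (ε : ℤ)]
        ((matM ^ ((-n : ℤ) - 1) : (Matrix (Fin 3) (Fin 3) ℤ)ˣ) : Matrix (Fin 3) (Fin 3) ℤ)
        = ![y, 9 * y - x - 3 * (ε : ℤ), (ε : ℤ)] := by
      rw [zpow_sub_one, Units.val_mul, ← Matrix.vecMul_vecMul, h, vmulMinv]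
      simp
    have hprod : (9 * y - x - 3 * (ε : ℤ)) * x = y ^ 2 + 3 * (ε : ℤ) * y + (ε : ℤ) ^ 2 := by
      linear_combination -heq
    have hppos : 0 < (9 * y - x - 3 * (ε : ℤ)) * x := by
      rw [hprod]; positivity
    have hY : 0 < 9 * y - x - 3 * (ε : ℤ) := by
      rcases mul_pos_iff.mp hppos with ⟨h1, _⟩ | ⟨_, h2⟩
      · exact h1
      · linarith
    refine ⟨y, 9 * y - x - 3 * (ε : ℤ), hstep, hy, hY, by linear_combination heq, hdy, ?_⟩
    exact dvd_sub (dvd_sub (Dvd.dvd.mul_left hdy 9) hdx) (Dvd.dvd.mul_left (dvd_refl _) 3)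

/-- Descent: every positive solution is on the orbit. -/
lemma descent (ε : ℕ) (hε : 0 < ε) : ∀ k : ℕ, ∀ x y : ℤ, (x + y).toNat ≤ k →
    0 < x → 0 < y →
    x ^ 2 - 9 * x * y + y ^ 2 + 3 * (ε : ℤ) * x + 3 * (ε : ℤ) * y + (ε : ℤ) ^ 2 = 0 →
    (ε : ℤ) ∣ x → (ε : ℤ) ∣ y →
    ∃ n : ℤ, Matrix.vecMul ![(ε : ℤ), (ε : ℤ), (ε : ℤ)]
        ((matM ^ n : (Matrix (Fin 3) (Fin 3) ℤ)ˣ) : Matrix (Fin 3) (Fin 3) ℤ)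
        = ![x, y, (ε : ℤ)] := by
  have hε1 : (0 : ℤ) < (ε : ℤ) := by exact_mod_cast hε
  intro k
  induction k with
  | zero => intro x y hk hx hy _ _ _; omega
  | succ k ih =>
    intro x y hk hx hy heq hdx hdy
    rcases lt_trichotomy x y with hlt | heqxy | hgt
    · -- x < y : predecessor under M⁻¹ is (9x - y - 3ε, x)
      set y' : ℤ := 9 * x - y - 3 * (ε : ℤ) with hy'
      have hxe : (ε : ℤ) ≤ x := Int.le_of_dvd hx hdx
      have hprod : y' * y = x ^ 2 + 3 * (ε : ℤ) * x + (ε : ℤ) ^ 2 := by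
        rw [hy']; linear_combination -heq
      have hppos : 0 < y' * y := by rw [hprod]; positivity
      have hy'pos : 0 < y' := by
        rcases mul_pos_iff.mp hppos with ⟨h1, _⟩ | ⟨_, h2⟩
        · exact h1
        · linarith
      have hfact : (x - y) * (x - y') = -(7 * x + (ε : ℤ)) * (x - (ε : ℤ)) := by
        rw [hy']; linear_combination -heq
      have hy'le : y' ≤ x := by nlinarith [hfact]
      obtain ⟨n, hn⟩ := ih y' x (by omega) hy'pos hx (by rw [hy']; linear_combination heq)
        (by rw [hy']
            exact dvd_sub (dvd_sub (Dvd.dvd.mul_left hdx 9) hdy) (Dvd.dvd.mul_left (dvd_refl _) 3))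
        hdx
      refine ⟨n - 1, ?_⟩
      rw [zpow_sub_one, Units.val_mul, ← Matrix.vecMul_vecMul, hn, vmulMinv]
      simp only [Matrix.cons_val_zero, Matrix.cons_val_one, Matrix.head_cons,
        Matrix.cons_val_two, Matrix.tail_cons]
      congr 2
      rw [hy']; ring
    · -- x = y : then x = ε, n = 0
      subst heqxy
      have hfac : (x - (ε : ℤ)) * (7 * x + (ε : ℤ)) = 0 := by linear_combination -heq
      have hxε : x = (ε : ℤ) := by
        rcases mul_eq_zero.mp hfac with h | h
        · linarith
        · linarith
      refine ⟨0, ?_⟩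
      rw [zpow_zero, Units.val_one, Matrix.vecMul_one, hxε]
    · -- y < x : predecessor under M is (y, 9y - x - 3ε)
      set x' : ℤ := 9 * y - x - 3 * (ε : ℤ) with hx'
      have hye : (ε : ℤ) ≤ y := Int.le_of_dvd hy hdy
      have hprod : x' * x = y ^ 2 + 3 * (ε : ℤ) * y + (ε : ℤ) ^ 2 := by
        rw [hx']; linear_combination -heq
      have hppos : 0 < x' * x := by rw [hprod]; positivity
      have hx'pos : 0 < x' := by
        rcases mul_pos_iff.mp hppos with ⟨h1, _⟩ | ⟨_, h2⟩
        · exact h1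
        · linarith
      have hfact : (y - x) * (y - x') = -(7 * y + (ε : ℤ)) * (y - (ε : ℤ)) := by
        rw [hx']; linear_combination -heq
      have hx'le : x' ≤ y := by nlinarith [hfact]
      obtain ⟨n, hn⟩ := ih y x' (by omega) hy hx'pos (by rw [hx']; linear_combination heq)
        hdy
        (by rw [hx']
            exact dvd_sub (dvd_sub (Dvd.dvd.mul_left hdy 9) hdx) (Dvd.dvd.mul_left (dvd_refl _) 3))
      refine ⟨n + 1, ?_⟩
      rw [zpow_add_one, Units.val_mul, ← Matrix.vecMul_vecMul, hn, vmulM]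
      simp only [Matrix.cons_val_zero, Matrix.cons_val_one, Matrix.head_cons,
        Matrix.cons_val_two, Matrix.tail_cons]
      congr 2
      rw [hx']; ring

/-- the pairs (x,y) of positive integers with
x² − 9xy + y² + 3εx + 3εy + ε² = 0 and ε ∣ x, ε ∣ y are exactly the pairs (x,y) with
(x, y, ε) = (ε, ε, ε)·Mⁿ, n ∈ ℤ. -/
theorem hyperbola_orbit (ε : ℕ) (hε : 0 < ε) :
    {p : ℤ × ℤ | 0 < p.1 ∧ 0 < p.2 ∧
        p.1 ^ 2 - 9 * p.1 * p.2 + p.2 ^ 2 + 3 * (ε : ℤ) * p.1 + 3 * (ε : ℤ) * p.2 +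
          (ε : ℤ) ^ 2 = 0 ∧
        (ε : ℤ) ∣ p.1 ∧ (ε : ℤ) ∣ p.2} =
    {p : ℤ × ℤ | ∃ n : ℤ,
        ![p.1, p.2, (ε : ℤ)] = Matrix.vecMul ![(ε : ℤ), (ε : ℤ), (ε : ℤ)]
          ((matM ^ n : (Matrix (Fin 3) (Fin 3) ℤ)ˣ) : Matrix (Fin 3) (Fin 3) ℤ)} := by


  ext ⟨x, y⟩
  simp only [Set.mem_setOf_eq]
  constructor
  · rintro ⟨hx, hy, heq, hdx, hdy⟩
    obtain ⟨n, hn⟩ := descent ε hε (x + y).toNat x y le_rfl hx hy heq hdx hdy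
    exact ⟨n, hn.symm⟩
  · rintro ⟨n, hn⟩
    obtain ⟨a, b, h, ha, hb, heq, hda, hdb⟩ := orbit_prop ε hε n
    have hab := hn.trans h
    have h0 : x = a := by simpa using congrFun hab 0
    have h1 : y = b := by simpa using congrFun hab 1
    subst h0; subst h1
    exact ⟨ha, hb, heq, hda, hdb⟩
end
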